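/- Let w : (0,∞) → [0,∞) be non-increasing, let z(r) = (1+r)^{-t} for some t > 0, and suppose there exist C > 0 and a function η : (0,∞) → [0,∞) with η(r) → 0 as r → ∞ such that w(2r) ≤ C(1+r)^{-t} + η(r) w(r) for all r > 0. If w is bounded, then there exists C' > 0 such that w(r) ≤ C'(1+r)^{-t} for all r > 0. -/

import Mathlib

open Set Filter

/-- bootstrapped algebraic decay. If a bounded non-increasing `w ≥ 0` satisfies
`w(2r) ≤ C(1+r)^{-t} + η(r) w(r)` with `η(r) → 0` as `r → ∞`, then `w(r) ≤ C'(1+r)^{-t}`. -/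
theorem stmt8 (w η : ℝ → ℝ) (t C : ℝ) (ht : 0 < t) (hC : 0 < C)
    (hw_nonneg : ∀ r : ℝ, 0 < r → 0 ≤ w r)
    (hw_anti : AntitoneOn w (Ioi (0 : ℝ)))
    (hη_nonneg : ∀ r : ℝ, 0 < r → 0 ≤ η r)
    (hη_lim : Tendsto η atTop (nhds 0))
    (hcontr : ∀ r : ℝ, 0 < r → w (2 * r) ≤ C * (1 + r) ^ (-t) + η r * w r)
    (hw_bdd : ∃ M : ℝ, ∀ r : ℝ, 0 < r → w r ≤ M) :
    ∃ C' : ℝ, 0 < C' ∧ ∀ r : ℝ, 0 < r → w r ≤ C' * (1 + r) ^ (-t) := by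
  obtain ⟨M, hM⟩ := hw_bdd
  have hε : (0:ℝ) < 2 ^ (-t-1) := Real.rpow_pos_of_pos two_pos _
  obtain ⟨R0, hR0⟩ := Filter.eventually_atTop.1 (hη_lim.eventually_lt_const hε)
  set R : ℝ := max R0 1 with hRdef
  have hR1 : (1:ℝ) ≤ R := le_max_right _ _
  have hRpos : (0:ℝ) < R := lt_of_lt_of_le one_pos hR1
  have hηR : ∀ r, R ≤ r → η r ≤ 2 ^ (-t-1) := fun r hr =>
    (hR0 r (le_trans (le_max_left _ _) hr)).le
  have h2t : (0:ℝ) < 2 ^ t := Real.rpow_pos_of_pos two_pos t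
  set A : ℝ := max (M * (1+2*R)^t) (2^(t+1) * C) with hAdef
  have hA2 : 2^(t+1) * C ≤ A := le_max_right _ _
  have h2t1 : (0:ℝ) < 2^(t+1) := Real.rpow_pos_of_pos two_pos _
  have hA0 : 0 < A := lt_of_lt_of_le (by positivity) hA2
  have key : ∀ n : ℕ, ∀ r, 0 < r → r ≤ 2^n * (2*R) → w r * (1+r)^t ≤ A := by
    intro n
    induction n with
    | zero =>
      intro r hr hle
      rw [pow_zero, one_mul] at hle
      have hwr := hw_nonneg r hr
      have hMr := hM r hr
      calc w r * (1+r)^t ≤ M * (1+2*R)^t := by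
            apply mul_le_mul hMr (Real.rpow_le_rpow (by linarith) (by linarith) ht.le)
              (Real.rpow_nonneg (by linarith) t) (by linarith)
        _ ≤ A := le_max_left _ _
    | succ n ih =>
      intro r hr hle
      by_cases hcase : r ≤ 2^n * (2*R)
      · exact ih r hr hcase
      push_neg at hcase
      set s := r/2 with hsdef
      have hs : 0 < s := by positivity
      have hsle : s ≤ 2^n*(2*R) := by
        rw [pow_succ] at hle
        rw [hsdef]; linarith
      have h1pow : (1:ℝ) ≤ 2^n := one_le_pow₀ (by norm_num)
      have hsR : R ≤ s := by nlinarith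
      have hIH := ih s hs hsle
      have hη := hηR s hsR
      have hη0 := hη_nonneg s hs
      have hws := hw_nonneg s hs
      have hr2 : r = 2 * s := by rw [hsdef]; ring
      have hcw := hcontr s hs
      rw [hr2]
      have h1s : (0:ℝ) < 1 + s := by linarith
      have h12s : (0:ℝ) < 1 + 2*s := by linarith
      have hpow : (1+2*s)^t ≤ 2^t * (1+s)^t := by
        rw [← Real.mul_rpow (by norm_num) h1s.le]
        exact Real.rpow_le_rpow h12s.le (by linarith) ht.le
      have hinv : (1+s)^(-t) * (1+s)^t = 1 := by
        rw [← Real.rpow_add h1s]; simp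
      have hpos1 : (0:ℝ) < (1+s)^t := Real.rpow_pos_of_pos h1s t
      have hhalf : η s * 2^t ≤ 1/2 := by
        have heq : (2:ℝ)^(-t-1) * 2^t = 1/2 := by
          rw [← Real.rpow_add two_pos, show -t-1+t = -1 by ring, Real.rpow_neg_one]
          norm_num
        calc η s * 2^t ≤ 2^(-t-1) * 2^t := mul_le_mul_of_nonneg_right hη h2t.le
          _ = 1/2 := heq
      calc w (2*s) * (1+2*s)^t
          ≤ (C * (1+s)^(-t) + η s * w s) * (2^t * (1+s)^t) := by
            apply mul_le_mul hcw hpow (Real.rpow_nonneg h12s.le t)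
            exact add_nonneg (by positivity) (mul_nonneg hη0 hws)
        _ = C * 2^t * ((1+s)^(-t) * (1+s)^t) + (η s * 2^t) * (w s * (1+s)^t) := by ring
        _ = C * 2^t + (η s * 2^t) * (w s * (1+s)^t) := by rw [hinv]; ring
        _ ≤ C * 2^t + (1/2) * A := by
            apply add_le_add_right
            exact mul_le_mul hhalf hIH (mul_nonneg hws hpos1.le) (by norm_num)
        _ ≤ A := by
            have heq2 : (2:ℝ)^(t+1) * C = 2*(C*2^t) := by
              rw [Real.rpow_add two_pos, Real.rpow_one]; ring
            linarith
  refine ⟨A, hA0, fun r hr => ?_⟩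
  obtain ⟨n, hn⟩ := pow_unbounded_of_one_lt r (by norm_num : (1:ℝ) < 2)
  have hle : r ≤ 2^n * (2*R) := by
    have h2R : (1:ℝ) ≤ 2*R := by linarith
    nlinarith [pow_pos (show (0:ℝ) < 2 by norm_num) n]
  have hk := key n r hr hle
  have h1r : (0:ℝ) < 1+r := by linarith
  have hpos : (0:ℝ) < (1+r)^t := Real.rpow_pos_of_pos h1r t
  calc w r ≤ A / (1+r)^t := (le_div_iff₀ hpos).2 hk
    _ = A * (1+r)^(-t) := by rw [Real.rpow_neg h1r.le]; ring
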